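/- arXiv:2411.13985 — 2 statements merged into one kernel-verified Lean document; each statement's English description precedes it below -/
import Mathlib

section
/- In every segment representation (α, β) of the Pappus gadget, the three anchor points α(p7), α(p8), α(p9) are collinear. -/
set_option maxRecDepth 8000

abbrev Pt : Type := ℝ × ℝ

def IsLine (L : Set Pt) : Prop :=
  ∃ a b : Pt, a ≠ b ∧ L = (affineSpan ℝ {a, b} : Set Pt)

def IsSegment (S : Set Pt) : Prop :=
  ∃ a b : Pt, a ≠ b ∧ S = segment ℝ a b

structure Hypergraph' (ι : Type) where
  V : Finset ι
  E : Finset (Finset ι)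
  edge_nonempty : ∀ e ∈ E, e.Nonempty
  edge_subset : ∀ e ∈ E, e ⊆ V

structure LineRep {ι : Type} (H : Hypergraph' ι) where
  α : ι → Pt
  β : Finset ι → Set Pt
  α_inj : Set.InjOn α ↑H.V
  β_inj : Set.InjOn β ↑H.E
  β_isLine : ∀ e ∈ H.E, IsLine (β e)
  incidence : ∀ v ∈ H.V, ∀ e ∈ H.E, (v ∈ e ↔ α v ∈ β e)

structure SegmentRep {ι : Type} (H : Hypergraph' ι) where
  α : ι → Pt
  β : Finset ι → Set Pt
  α_inj : Set.InjOn α ↑H.V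
  β_inj : Set.InjOn β ↑H.E
  β_isSegment : ∀ e ∈ H.E, IsSegment (β e)
  incidence : ∀ v ∈ H.V, ∀ e ∈ H.E, (v ∈ e ↔ α v ∈ β e)

def SegmentRep.Strict {ι : Type} {H : Hypergraph' ι} (R : SegmentRep H) : Prop :=
  ∀ e ∈ H.E, ∀ e' ∈ H.E, e ≠ e' → (R.β e ∩ R.β e').Subsingleton

def LineRep.CrossingFree {ι : Type} {H : Hypergraph' ι} (R : LineRep H) : Prop :=
  ∀ e ∈ H.E, ∀ e' ∈ H.E, ((R.β e ∩ R.β e').Nonempty ↔ ∃ v, v ∈ e ∧ v ∈ e')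

def SegmentRep.CrossingFree {ι : Type} {H : Hypergraph' ι} (R : SegmentRep H) : Prop :=
  ∀ e ∈ H.E, ∀ e' ∈ H.E, ((R.β e ∩ R.β e').Nonempty ↔ ∃ v, v ∈ e ∧ v ∈ e')

def pappusE : Finset (Finset (Fin 9)) :=
  {({0, 1, 2} : Finset (Fin 9)), {3, 4, 5}, {0, 3, 7}, {0, 4, 8},
    {1, 3, 6}, {1, 5, 8}, {2, 4, 6}, {2, 5, 7}}

/-- The Pappus gadget: vertex `i : Fin 9` stands for `p(i+1)`;
the anchors `p7, p8, p9` are the vertices `6, 7, 8`. -/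
def pappus : Hypergraph' (Fin 9) where
  V := Finset.univ
  E := pappusE
  edge_nonempty := by decide
  edge_subset := by decide


lemma sub_ne_comp {u v : Pt} (h : u ≠ v) : u.1 - v.1 ≠ 0 ∨ u.2 - v.2 ≠ 0 := by
  by_contra hcon
  push_neg at hcon
  exact h (Prod.ext_iff.mpr ⟨by linarith [hcon.1], by linarith [hcon.2]⟩)

lemma sumsq_ne {u v : Pt} (h : u ≠ v) : (u.1 - v.1) ^ 2 + (u.2 - v.2) ^ 2 ≠ 0 := by
  intro h0
  have h1 : u.1 - v.1 = 0 := by nlinarith [sq_nonneg (u.1 - v.1), sq_nonneg (u.2 - v.2)]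
  have h2 : u.2 - v.2 = 0 := by nlinarith [sq_nonneg (u.1 - v.1), sq_nonneg (u.2 - v.2)]
  exact h (Prod.ext_iff.mpr ⟨by linarith, by linarith⟩)

lemma crossT {u1 u2 v1 v2 w1 w2 : ℝ} (hu : u1 ≠ 0 ∨ u2 ≠ 0)
    (h1 : u1 * v2 - u2 * v1 = 0) (h2 : u1 * w2 - u2 * w1 = 0) :
    v1 * w2 - v2 * w1 = 0 := by
  rcases hu with h | h
  · have h3 : u1 * (v1 * w2 - v2 * w1) = 0 := by linear_combination v1 * h2 - w1 * h1
    exact (mul_eq_zero.mp h3).resolve_left h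
  · have h3 : u2 * (v1 * w2 - v2 * w1) = 0 := by linear_combination v2 * h2 - w2 * h1
    exact (mul_eq_zero.mp h3).resolve_left h

lemma exists_smul {x m : Pt} {d1 d2 : ℝ} (hd : d1 ≠ 0 ∨ d2 ≠ 0)
    (h : (x.1 - m.1) * d2 - (x.2 - m.2) * d1 = 0) : ∃ r : ℝ, x = r • ((d1, d2) : Pt) +ᵥ m := by
  rcases hd with h1 | h1
  · refine ⟨(x.1 - m.1) / d1, Prod.ext_iff.mpr ⟨?_, ?_⟩⟩ <;>
      simp only [vadd_eq_add, Prod.smul_mk, smul_eq_mul, Prod.fst_add, Prod.snd_add]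
    · field_simp
      ring
    · field_simp
      linear_combination -h
  · refine ⟨(x.2 - m.2) / d2, Prod.ext_iff.mpr ⟨?_, ?_⟩⟩ <;>
      simp only [vadd_eq_add, Prod.smul_mk, smul_eq_mul, Prod.fst_add, Prod.snd_add]
    · field_simp
      linear_combination h
    · field_simp
      ring

lemma collinear_triple_iff (a b c : Pt) :
    Collinear ℝ ({a, b, c} : Set Pt) ↔
      (b.1 - a.1) * (c.2 - a.2) - (b.2 - a.2) * (c.1 - a.1) = 0 := by
  constructor
  · intro h
    rw [collinear_iff_exists_forall_eq_smul_vadd] at h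
    obtain ⟨p, v, hv⟩ := h
    obtain ⟨ra, ha⟩ := hv a (by simp)
    obtain ⟨rb, hb⟩ := hv b (by simp)
    obtain ⟨rc, hc⟩ := hv c (by simp)
    subst ha hb hc
    simp only [vadd_eq_add, Prod.fst_add, Prod.snd_add, Prod.smul_fst, Prod.smul_snd,
      smul_eq_mul]
    ring
  · intro h
    rcases eq_or_ne a b with rfl | hab
    · rw [Set.insert_idem]
      exact collinear_pair ℝ a c
    · rw [collinear_iff_exists_forall_eq_smul_vadd]
      have hd : b.1 - a.1 ≠ 0 ∨ b.2 - a.2 ≠ 0 := sub_ne_comp (Ne.symm hab)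
      refine ⟨a, (b.1 - a.1, b.2 - a.2), ?_⟩
      intro x hx
      simp only [Set.mem_insert_iff, Set.mem_singleton_iff] at hx
      rcases hx with rfl | rfl | rfl
      · exact exists_smul hd (by ring)
      · exact exists_smul hd (by ring)
      · exact exists_smul hd (by linear_combination -h)

lemma collinear_segment' (x y : Pt) : Collinear ℝ (segment ℝ x y) := by
  rw [collinear_iff_exists_forall_eq_smul_vadd]
  refine ⟨x, y - x, ?_⟩
  intro z hz
  rw [segment_eq_image'] at hz
  obtain ⟨θ, _, rfl⟩ := hz
  exact ⟨θ, by rw [vadd_eq_add]; ring⟩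

lemma pappus_deg (a b c a' b' c' m : Pt)
    (hab : a ≠ b) (ha'b' : a' ≠ b') (haa' : a ≠ a') (hbb' : b ≠ b')
    (hcol1 : Collinear ℝ {a, b, c}) (hcol2 : Collinear ℝ {a', b', c'})
    (hm1 : (a'.1 - a.1) * (m.2 - a.2) - (a'.2 - a.2) * (m.1 - a.1) = 0)
    (hm2 : (b'.1 - b.1) * (m.2 - b.2) - (b'.2 - b.2) * (m.1 - b.1) = 0)
    (hpar : (a'.1 - a.1) * (b'.2 - b.2) - (a'.2 - a.2) * (b'.1 - b.1) = 0) :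
    Collinear ℝ ({a, b, c, a', b', c'} : Set Pt) := by
  have EC := (collinear_triple_iff a b c).mp hcol1
  have EC' := (collinear_triple_iff a' b' c').mp hcol2
  have hd : a'.1 - a.1 ≠ 0 ∨ a'.2 - a.2 ≠ 0 := sub_ne_comp (Ne.symm haa')
  have he : b'.1 - b.1 ≠ 0 ∨ b'.2 - b.2 ≠ 0 := sub_ne_comp (Ne.symm hbb')
  have hg : b.1 - a.1 ≠ 0 ∨ b.2 - a.2 ≠ 0 := sub_ne_comp (Ne.symm hab)
  have hg' : b'.1 - a'.1 ≠ 0 ∨ b'.2 - a'.2 ≠ 0 := sub_ne_comp (Ne.symm ha'b')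
  have Fa : (a.1 - m.1) * (a'.2 - a.2) - (a.2 - m.2) * (a'.1 - a.1) = 0 := by
    linear_combination hm1
  have Fa' : (a'.1 - m.1) * (a'.2 - a.2) - (a'.2 - m.2) * (a'.1 - a.1) = 0 := by
    linear_combination hm1
  have hed : (b'.1 - b.1) * (a'.2 - a.2) - (b'.2 - b.2) * (a'.1 - a.1) = 0 := by
    linear_combination -hpar
  have Fb : (b.1 - m.1) * (a'.2 - a.2) - (b.2 - m.2) * (a'.1 - a.1) = 0 :=
    crossT he (by linear_combination -hm2) hed
  have Fb' : (b'.1 - m.1) * (a'.2 - a.2) - (b'.2 - m.2) * (a'.1 - a.1) = 0 := by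
    linear_combination Fb + hed
  have hgd : (b.1 - a.1) * (a'.2 - a.2) - (b.2 - a.2) * (a'.1 - a.1) = 0 := by
    linear_combination Fb - Fa
  have Fc0 : (c.1 - a.1) * (a'.2 - a.2) - (c.2 - a.2) * (a'.1 - a.1) = 0 :=
    crossT hg EC hgd
  have Fc : (c.1 - m.1) * (a'.2 - a.2) - (c.2 - m.2) * (a'.1 - a.1) = 0 := by
    linear_combination Fc0 + Fa
  have hg'd : (b'.1 - a'.1) * (a'.2 - a.2) - (b'.2 - a'.2) * (a'.1 - a.1) = 0 := by
    linear_combination Fb' - Fa'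
  have Fc0' : (c'.1 - a'.1) * (a'.2 - a.2) - (c'.2 - a'.2) * (a'.1 - a.1) = 0 :=
    crossT hg' EC' hg'd
  have Fc' : (c'.1 - m.1) * (a'.2 - a.2) - (c'.2 - m.2) * (a'.1 - a.1) = 0 := by
    linear_combination Fc0' + Fa'
  rw [collinear_iff_exists_forall_eq_smul_vadd]
  refine ⟨m, (a'.1 - a.1, a'.2 - a.2), ?_⟩
  intro x hx
  simp only [Set.mem_insert_iff, Set.mem_singleton_iff] at hx
  rcases hx with rfl | rfl | rfl | rfl | rfl | rfl
  · exact exists_smul hd Fa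
  · exact exists_smul hd Fb
  · exact exists_smul hd Fc
  · exact exists_smul hd Fa'
  · exact exists_smul hd Fb'
  · exact exists_smul hd Fc'

lemma pappus_case_all (P0 P1 P3 P4 P6 P7 P8 : Pt)
    (h01 : P0 ≠ P1) (h13 : P1 ≠ P3) (h03 : P0 ≠ P3) (h04 : P0 ≠ P4)
    (hA : Collinear ℝ {P0, P1, P3}) (hB : Collinear ℝ {P0, P1, P4})
    (h136 : Collinear ℝ {P1, P3, P6}) (h037 : Collinear ℝ {P0, P3, P7})
    (h048 : Collinear ℝ {P0, P4, P8}) :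
    Collinear ℝ ({P6, P7, P8} : Set Pt) := by
  have EA := (collinear_triple_iff _ _ _).mp hA
  have EB := (collinear_triple_iff _ _ _).mp hB
  have E136 := (collinear_triple_iff _ _ _).mp h136
  have E037 := (collinear_triple_iff _ _ _).mp h037
  have E048 := (collinear_triple_iff _ _ _).mp h048
  have hd : P1.1 - P0.1 ≠ 0 ∨ P1.2 - P0.2 ≠ 0 := sub_ne_comp (Ne.symm h01)
  have h30 : P3.1 - P0.1 ≠ 0 ∨ P3.2 - P0.2 ≠ 0 := sub_ne_comp (Ne.symm h03)
  have h40 : P4.1 - P0.1 ≠ 0 ∨ P4.2 - P0.2 ≠ 0 := sub_ne_comp (Ne.symm h04)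
  have h31 : P3.1 - P1.1 ≠ 0 ∨ P3.2 - P1.2 ≠ 0 := sub_ne_comp (Ne.symm h13)
  have F7 : (P7.1 - P0.1) * (P1.2 - P0.2) - (P7.2 - P0.2) * (P1.1 - P0.1) = 0 :=
    crossT h30 E037 (by linear_combination -EA)
  have F8 : (P8.1 - P0.1) * (P1.2 - P0.2) - (P8.2 - P0.2) * (P1.1 - P0.1) = 0 :=
    crossT h40 E048 (by linear_combination -EB)
  have F6' : (P6.1 - P1.1) * (P1.2 - P0.2) - (P6.2 - P1.2) * (P1.1 - P0.1) = 0 :=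
    crossT h31 E136 (by linear_combination -EA)
  have F6 : (P6.1 - P0.1) * (P1.2 - P0.2) - (P6.2 - P0.2) * (P1.1 - P0.1) = 0 := by
    linear_combination F6'
  have G7 : (P1.1 - P0.1) * (P7.2 - P6.2) - (P1.2 - P0.2) * (P7.1 - P6.1) = 0 := by
    linear_combination F6 - F7
  have G8 : (P1.1 - P0.1) * (P8.2 - P6.2) - (P1.2 - P0.2) * (P8.1 - P6.1) = 0 := by
    linear_combination F6 - F8
  exact (collinear_triple_iff _ _ _).mpr (crossT hd G7 G8)
lemma pappus_core (p q x3 y3 x4 y4 x5 y5 x6 y6 x7 y7 x8 y8 : ℝ)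
    (H345 : (x4 - x3) * (y5 - y3) - (y4 - y3) * (x5 - x3) = 0)
    (H136 : (x3 - p) * y6 - y3 * (x6 - p) = 0)
    (H246 : (x4 - q) * y6 - y4 * (x6 - q) = 0)
    (H037 : x3 * y7 - y3 * x7 = 0)
    (H257 : (x5 - q) * y7 - y5 * (x7 - q) = 0)
    (H048 : x4 * y8 - y4 * x8 = 0)
    (H158 : (x5 - p) * y8 - y5 * (x8 - p) = 0)
    (hd1 : (x3 - p) * y4 - y3 * (x4 - q) ≠ 0)
    (hd2 : x3 * y5 - y3 * (x5 - q) ≠ 0)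
    (hd3 : x4 * y5 - y4 * (x5 - p) ≠ 0) :
    (x7 - x6) * (y8 - y6) - (y7 - y6) * (x8 - x6) = 0 := by
  have hx6 : ((x3 - p) * y4 - y3 * (x4 - q)) * x6
      = q * x3 * y4 - p * y3 * x4 - p * q * y4 + p * q * y3 := by
    linear_combination (x4 - q) * H136 - (x3 - p) * H246
  have hy6 : ((x3 - p) * y4 - y3 * (x4 - q)) * y6 = (q - p) * (y3 * y4) := by
    linear_combination y4 * H136 - y3 * H246
  have hx7 : (x3 * y5 - y3 * (x5 - q)) * x7 = q * (x3 * y5) := by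
    linear_combination (x5 - q) * H037 - x3 * H257
  have hy7 : (x3 * y5 - y3 * (x5 - q)) * y7 = q * (y3 * y5) := by
    linear_combination y5 * H037 - y3 * H257
  have hx8 : (x4 * y5 - y4 * (x5 - p)) * x8 = p * (x4 * y5) := by
    linear_combination (x5 - p) * H048 - x4 * H158
  have hy8 : (x4 * y5 - y4 * (x5 - p)) * y8 = p * (y4 * y5) := by
    linear_combination y5 * H048 - y4 * H158
  have key : (((x3 - p) * y4 - y3 * (x4 - q)) * ((x3 - p) * y4 - y3 * (x4 - q))
        * (x3 * y5 - y3 * (x5 - q)) * (x4 * y5 - y4 * (x5 - p)))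
      * ((x7 - x6) * (y8 - y6) - (y7 - y6) * (x8 - x6)) = 0 := by
    linear_combination
      (p * q * (p - q) * (y3 * y4 * y5) * ((x3 - p) * y4 - y3 * (x4 - q))) * H345
      + (((x3 - p) * y4 - y3 * (x4 - q)) * ((x3 - p) * y4 - y3 * (x4 - q))
          * (x4 * y5 - y4 * (x5 - p)) * (y8 - y6)) * hx7
      - ((x3 * y5 - y3 * (x5 - q)) * ((x3 - p) * y4 - y3 * (x4 - q))
          * (x4 * y5 - y4 * (x5 - p)) * (y8 - y6)) * hx6
      + ((((x3 - p) * y4 - y3 * (x4 - q)) * (q * (x3 * y5))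
          - (x3 * y5 - y3 * (x5 - q)) * (q * x3 * y4 - p * y3 * x4 - p * q * y4 + p * q * y3))
          * ((x3 - p) * y4 - y3 * (x4 - q))) * hy8
      - ((((x3 - p) * y4 - y3 * (x4 - q)) * (q * (x3 * y5))
          - (x3 * y5 - y3 * (x5 - q)) * (q * x3 * y4 - p * y3 * x4 - p * q * y4 + p * q * y3))
          * (x4 * y5 - y4 * (x5 - p))) * hy6
      - (((x3 - p) * y4 - y3 * (x4 - q)) * ((x3 - p) * y4 - y3 * (x4 - q))
          * (x4 * y5 - y4 * (x5 - p)) * (x8 - x6)) * hy7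
      + ((x3 * y5 - y3 * (x5 - q)) * ((x3 - p) * y4 - y3 * (x4 - q))
          * (x4 * y5 - y4 * (x5 - p)) * (x8 - x6)) * hy6
      - ((((x3 - p) * y4 - y3 * (x4 - q)) * (q * (y3 * y5))
          - (x3 * y5 - y3 * (x5 - q)) * ((q - p) * (y3 * y4)))
          * ((x3 - p) * y4 - y3 * (x4 - q))) * hx8
      + ((((x3 - p) * y4 - y3 * (x4 - q)) * (q * (y3 * y5))
          - (x3 * y5 - y3 * (x5 - q)) * ((q - p) * (y3 * y4)))
          * (x4 * y5 - y4 * (x5 - p))) * hx6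
  have hprod : (((x3 - p) * y4 - y3 * (x4 - q)) * ((x3 - p) * y4 - y3 * (x4 - q))
      * (x3 * y5 - y3 * (x5 - q)) * (x4 * y5 - y4 * (x5 - p))) ≠ 0 :=
    mul_ne_zero (mul_ne_zero (mul_ne_zero hd1 hd1) hd2) hd3
  exact (mul_eq_zero.mp key).resolve_left hprod
lemma pappus_alg (a0 b0 a1 b1 a2 b2 a3 b3 a4 b4 a5 b5 a6 b6 a7 b7 a8 b8 : ℝ)
    (hr : (a1 - a0) ^ 2 + (b1 - b0) ^ 2 ≠ 0)
    (H012 : (a1 - a0) * (b2 - b0) - (b1 - b0) * (a2 - a0) = 0)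
    (H345 : (a4 - a3) * (b5 - b3) - (b4 - b3) * (a5 - a3) = 0)
    (H136 : (a3 - a1) * (b6 - b1) - (b3 - b1) * (a6 - a1) = 0)
    (H246 : (a4 - a2) * (b6 - b2) - (b4 - b2) * (a6 - a2) = 0)
    (H037 : (a3 - a0) * (b7 - b0) - (b3 - b0) * (a7 - a0) = 0)
    (H257 : (a5 - a2) * (b7 - b2) - (b5 - b2) * (a7 - a2) = 0)
    (H048 : (a4 - a0) * (b8 - b0) - (b4 - b0) * (a8 - a0) = 0)
    (H158 : (a5 - a1) * (b8 - b1) - (b5 - b1) * (a8 - a1) = 0)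
    (hd1 : (a3 - a1) * (b4 - b2) - (b3 - b1) * (a4 - a2) ≠ 0)
    (hd2 : (a3 - a0) * (b5 - b2) - (b3 - b0) * (a5 - a2) ≠ 0)
    (hd3 : (a4 - a0) * (b5 - b1) - (b4 - b0) * (a5 - a1) ≠ 0) :
    (a7 - a6) * (b8 - b6) - (b7 - b6) * (a8 - a6) = 0 := by
  have key := pappus_core ((a1 - a0) ^ 2 + (b1 - b0) ^ 2) ((a1 - a0) * (a2 - a0) + (b1 - b0) * (b2 - b0)) ((a1 - a0) * (a3 - a0) + (b1 - b0) * (b3 - b0)) ((a1 - a0) * (b3 - b0) - (b1 - b0) * (a3 - a0)) ((a1 - a0) * (a4 - a0) + (b1 - b0) * (b4 - b0)) ((a1 - a0) * (b4 - b0) - (b1 - b0) * (a4 - a0)) ((a1 - a0) * (a5 - a0) + (b1 - b0) * (b5 - b0)) ((a1 - a0) * (b5 - b0) - (b1 - b0) * (a5 - a0)) ((a1 - a0) * (a6 - a0) + (b1 - b0) * (b6 - b0)) ((a1 - a0) * (b6 - b0) - (b1 - b0) * (a6 - a0)) ((a1 - a0) * (a7 - a0) + (b1 - b0) * (b7 -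 b0)) ((a1 - a0) * (b7 - b0) - (b1 - b0) * (a7 - a0)) ((a1 - a0) * (a8 - a0) + (b1 - b0) * (b8 - b0)) ((a1 - a0) * (b8 - b0) - (b1 - b0) * (a8 - a0))
    (by linear_combination ((a1 - a0) ^ 2 + (b1 - b0) ^ 2) * H345)
    (by linear_combination ((a1 - a0) ^ 2 + (b1 - b0) ^ 2) * H136)
    (by linear_combination ((a1 - a0) ^ 2 + (b1 - b0) ^ 2) * H246 + (((a1 - a0) * (a4 - a0) + (b1 - b0) * (b4 - b0)) - ((a1 - a0) * (a6 - a0) + (b1 - b0) * (b6 - b0))) * H012)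
    (by linear_combination ((a1 - a0) ^ 2 + (b1 - b0) ^ 2) * H037)
    (by linear_combination ((a1 - a0) ^ 2 + (b1 - b0) ^ 2) * H257 + (((a1 - a0) * (a5 - a0) + (b1 - b0) * (b5 - b0)) - ((a1 - a0) * (a7 - a0) + (b1 - b0) * (b7 - b0))) * H012)
    (by linear_combination ((a1 - a0) ^ 2 + (b1 - b0) ^ 2) * H048)
    (by linear_combination ((a1 - a0) ^ 2 + (b1 - b0) ^ 2) * H158)
    (by
      intro h0
      exact hd1 (mul_left_cancel₀ hr (by linear_combination h0 - (((a1 - a0) * (a3 - a0) + (b1 - b0) * (b3 - b0)) - ((a1 - a0) ^ 2 + (b1 - b0) ^ 2)) * H012)))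
    (by
      intro h0
      exact hd2 (mul_left_cancel₀ hr (by linear_combination h0 - ((a1 - a0) * (a3 - a0) + (b1 - b0) * (b3 - b0)) * H012)))
    (by
      intro h0
      exact hd3 (mul_left_cancel₀ hr (by linear_combination h0)))
  have fin : ((a1 - a0) ^ 2 + (b1 - b0) ^ 2) * ((a7 - a6) * (b8 - b6) - (b7 - b6) * (a8 - a6)) = 0 := by
    linear_combination key
  exact (mul_eq_zero.mp fin).resolve_left hr

theorem stmt2 (R : SegmentRep pappus) :
    Collinear ℝ {R.α 6, R.α 7, R.α 8} := by
  have hne : ∀ i j : Fin 9, i ≠ j → R.α i ≠ R.α j := fun i j hij h =>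
    hij (R.α_inj (Finset.mem_coe.mpr (Finset.mem_univ i))
      (Finset.mem_coe.mpr (Finset.mem_univ j)) h)
  have tri : ∀ u v w : Fin 9, ∀ e : Finset (Fin 9), e ∈ pappus.E → u ∈ e → v ∈ e → w ∈ e →
      Collinear ℝ {R.α u, R.α v, R.α w} := by
    intro u v w e he hu hv hw
    obtain ⟨x, y, hxy, hβ⟩ := R.β_isSegment e he
    have mem : ∀ z : Fin 9, z ∈ e → R.α z ∈ segment ℝ x y := fun z hz => by
      have h := (R.incidence z (Finset.mem_univ z) e he).mp hz
      rwa [hβ] at h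
    refine (collinear_segment' x y).subset ?_
    intro z hz
    simp only [Set.mem_insert_iff, Set.mem_singleton_iff] at hz
    rcases hz with rfl | rfl | rfl
    · exact mem u hu
    · exact mem v hv
    · exact mem w hw
  have K012 : Collinear ℝ {R.α 0, R.α 1, R.α 2} :=
    tri 0 1 2 {0,1,2} (by decide) (by decide) (by decide) (by decide)
  have K345 : Collinear ℝ {R.α 3, R.α 4, R.α 5} :=
    tri 3 4 5 {3,4,5} (by decide) (by decide) (by decide) (by decide)
  have K136 : Collinear ℝ {R.α 1, R.α 3, R.α 6} :=
    tri 1 3 6 {1,3,6} (by decide) (by decide) (by decide) (by decide)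
  have K246 : Collinear ℝ {R.α 2, R.α 4, R.α 6} :=
    tri 2 4 6 {2,4,6} (by decide) (by decide) (by decide) (by decide)
  have K037 : Collinear ℝ {R.α 0, R.α 3, R.α 7} :=
    tri 0 3 7 {0,3,7} (by decide) (by decide) (by decide) (by decide)
  have K257 : Collinear ℝ {R.α 2, R.α 5, R.α 7} :=
    tri 2 5 7 {2,5,7} (by decide) (by decide) (by decide) (by decide)
  have K048 : Collinear ℝ {R.α 0, R.α 4, R.α 8} :=
    tri 0 4 8 {0,4,8} (by decide) (by decide) (by decide) (by decide)
  have K158 : Collinear ℝ {R.α 1, R.α 5, R.α 8} :=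
    tri 1 5 8 {1,5,8} (by decide) (by decide) (by decide) (by decide)
  have E012 := (collinear_triple_iff _ _ _).mp K012
  have E345 := (collinear_triple_iff _ _ _).mp K345
  have E136 := (collinear_triple_iff _ _ _).mp K136
  have E246 := (collinear_triple_iff _ _ _).mp K246
  have E037 := (collinear_triple_iff _ _ _).mp K037
  have E257 := (collinear_triple_iff _ _ _).mp K257
  have E048 := (collinear_triple_iff _ _ _).mp K048
  have E158 := (collinear_triple_iff _ _ _).mp K158
  by_cases hC : Collinear ℝ {R.α 0, R.α 1, R.α 2, R.α 3, R.α 4, R.α 5}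
  · exact pappus_case_all (R.α 0) (R.α 1) (R.α 3) (R.α 4) (R.α 6) (R.α 7) (R.α 8)
      (hne 0 1 (by decide)) (hne 1 3 (by decide)) (hne 0 3 (by decide)) (hne 0 4 (by decide))
      (hC.subset (by
        intro z hz
        simp only [Set.mem_insert_iff, Set.mem_singleton_iff] at hz ⊢
        tauto))
      (hC.subset (by
        intro z hz
        simp only [Set.mem_insert_iff, Set.mem_singleton_iff] at hz ⊢
        tauto))
      K136 K037 K048
  · have hd1 : ((R.α 3).1 - (R.α 1).1) * ((R.α 4).2 - (R.α 2).2)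
        - ((R.α 3).2 - (R.α 1).2) * ((R.α 4).1 - (R.α 2).1) ≠ 0 := by
      intro h0
      apply hC
      refine (pappus_deg (R.α 1) (R.α 2) (R.α 0) (R.α 3) (R.α 4) (R.α 5) (R.α 6)
        (hne 1 2 (by decide)) (hne 3 4 (by decide)) (hne 1 3 (by decide)) (hne 2 4 (by decide))
        (K012.subset (by
          intro z hz
          simp only [Set.mem_insert_iff, Set.mem_singleton_iff] at hz ⊢
          tauto))
        K345 E136 E246 h0).subset (by
          intro z hz
          simp only [Set.mem_insert_iff, Set.mem_singleton_iff] at hz ⊢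
          tauto)
    have hd2 : ((R.α 3).1 - (R.α 0).1) * ((R.α 5).2 - (R.α 2).2)
        - ((R.α 3).2 - (R.α 0).2) * ((R.α 5).1 - (R.α 2).1) ≠ 0 := by
      intro h0
      apply hC
      refine (pappus_deg (R.α 0) (R.α 2) (R.α 1) (R.α 3) (R.α 5) (R.α 4) (R.α 7)
        (hne 0 2 (by decide)) (hne 3 5 (by decide)) (hne 0 3 (by decide)) (hne 2 5 (by decide))
        (K012.subset (by
          intro z hz
          simp only [Set.mem_insert_iff, Set.mem_singleton_iff] at hz ⊢
          tauto))
        (K345.subset (by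
          intro z hz
          simp only [Set.mem_insert_iff, Set.mem_singleton_iff] at hz ⊢
          tauto))
        E037 E257 h0).subset (by
          intro z hz
          simp only [Set.mem_insert_iff, Set.mem_singleton_iff] at hz ⊢
          tauto)
    have hd3 : ((R.α 4).1 - (R.α 0).1) * ((R.α 5).2 - (R.α 1).2)
        - ((R.α 4).2 - (R.α 0).2) * ((R.α 5).1 - (R.α 1).1) ≠ 0 := by
      intro h0
      apply hC
      refine (pappus_deg (R.α 0) (R.α 1) (R.α 2) (R.α 4) (R.α 5) (R.α 3) (R.α 8)
        (hne 0 1 (by decide)) (hne 4 5 (by decide)) (hne 0 4 (by decide)) (hne 1 5 (by decide))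
        K012
        (K345.subset (by
          intro z hz
          simp only [Set.mem_insert_iff, Set.mem_singleton_iff] at hz ⊢
          tauto))
        E048 E158 h0).subset (by
          intro z hz
          simp only [Set.mem_insert_iff, Set.mem_singleton_iff] at hz ⊢
          tauto)
    exact (collinear_triple_iff _ _ _).mpr
      (pappus_alg (R.α 0).1 (R.α 0).2 (R.α 1).1 (R.α 1).2 (R.α 2).1 (R.α 2).2
        (R.α 3).1 (R.α 3).2 (R.α 4).1 (R.α 4).2 (R.α 5).1 (R.α 5).2
        (R.α 6).1 (R.α 6).2 (R.α 7).1 (R.α 7).2 (R.α 8).1 (R.α 8).2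
        (sumsq_ne (hne 1 0 (by decide))) E012 E345 E136 E246 E037 E257 E048 E158 hd1 hd2 hd3)
end

section
/- Every hypergraph of rank at most 2 has a line representation. -/
set_option maxRecDepth 8000

lemma mem_span_pair_iff (p a b : Pt) :
    p ∈ (affineSpan ℝ {a, b} : Set Pt) ↔
      ∃ r : ℝ, r * (b.1 - a.1) = p.1 - a.1 ∧ r * (b.2 - a.2) = p.2 - a.2 := by
  rw [SetLike.mem_coe]
  have h : p = (p - a) +ᵥ a := by simp
  rw [h, vadd_left_mem_affineSpan_pair]
  constructor
  · rintro ⟨r, hr⟩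
    exact ⟨r, by rw [← hr]; simp [Prod.smul_def, Prod.sub_def],
      by rw [← hr]; simp [Prod.smul_def, Prod.sub_def]⟩
  · rintro ⟨r, h1, h2⟩
    exact ⟨r, Prod.ext (by simpa using h1) (by simpa using h2)⟩

lemma secant_mem {a b c : ℝ} (hab : a ≠ b) :
    (((c, c^2) : Pt) ∈ (affineSpan ℝ {((a : ℝ), a^2), ((b : ℝ), b^2)} : Set Pt)) ↔ (c = a ∨ c = b) := by
  rw [mem_span_pair_iff]
  constructor
  · rintro ⟨r, h1, h2⟩
    simp only at h1 h2
    have : (c - a) * (c - b) = 0 := by linear_combination (a + b) * h1 - h2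
    rcases mul_eq_zero.1 this with h | h
    · left; linarith
    · right; linarith
  · rintro (rfl | rfl)
    · exact ⟨0, by ring, by ring⟩
    · exact ⟨1, by ring, by ring⟩

lemma tangent_mem {a c : ℝ} :
    (((c, c^2) : Pt) ∈ (affineSpan ℝ {((a : ℝ), a^2), ((a + 1 : ℝ), a^2 + 2*a)} : Set Pt)) ↔ c = a := by
  rw [mem_span_pair_iff]
  constructor
  · rintro ⟨r, h1, h2⟩
    simp only at h1 h2
    have : (c - a)^2 = 0 := by linear_combination 2 * a * h1 - h2
    have := pow_eq_zero_iff (n := 2) (by norm_num) |>.1 this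
    linarith
  · rintro rfl
    exact ⟨0, by ring, by ring⟩

noncomputable def lineOf (a b : ℝ) : Set Pt :=
  if a = b then (affineSpan ℝ {((a : ℝ), a^2), ((a + 1 : ℝ), a^2 + 2*a)} : Set Pt)
  else (affineSpan ℝ {((a : ℝ), a^2), ((b : ℝ), b^2)} : Set Pt)

lemma lineOf_isLine (a b : ℝ) : IsLine (lineOf a b) := by
  unfold lineOf
  split_ifs with h
  · exact ⟨_, _, fun hc => by simp [Prod.ext_iff] at hc, rfl⟩
  · refine ⟨_, _, fun hc => ?_, rfl⟩
    rw [Prod.ext_iff] at hc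
    exact h hc.1

lemma mem_lineOf {a b c : ℝ} : (((c, c^2) : Pt) ∈ lineOf a b) ↔ (c = a ∨ c = b) := by
  unfold lineOf
  split_ifs with h
  · subst h; rw [tangent_mem]; tauto
  · exact secant_mem h

theorem stmt4 {ι : Type} (H : Hypergraph' ι) (hrank : ∀ e ∈ H.E, e.card ≤ 2) :
    Nonempty (LineRep H) := by
  classical
  set t : ι → ℝ := fun v => if h : v ∈ H.V then ((H.V.equivFin ⟨v, h⟩ : Fin H.V.card) : ℝ) else 0
    with ht
  have tinj : Set.InjOn t ↑H.V := by
    intro v hv w hw hvw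
    simp only [ht, Finset.mem_coe] at hv hw hvw
    rw [dif_pos hv, dif_pos hw] at hvw
    have h1 : H.V.equivFin ⟨v, hv⟩ = H.V.equivFin ⟨w, hw⟩ := by
      apply Fin.ext
      exact_mod_cast hvw
    have := H.V.equivFin.injective h1
    exact congrArg Subtype.val this
  set α : ι → Pt := fun v => (t v, (t v)^2) with hα
  set β : Finset ι → Set Pt := fun e =>
    if h : (e.image t).Nonempty then lineOf ((e.image t).min' h) ((e.image t).max' h) else ∅
    with hβ
  have himg : ∀ e ∈ H.E, (e.image t).Nonempty := fun e he => (H.edge_nonempty e he).image t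
  have hmem : ∀ e ∈ H.E, ∀ v : ι, (α v ∈ β e ↔ t v ∈ e.image t) := by
    intro e he v
    have hne := himg e he
    simp only [hβ, dif_pos hne, hα]
    rw [mem_lineOf]
    constructor
    · rintro (h | h)
      · rw [h]; exact Finset.min'_mem _ _
      · rw [h]; exact Finset.max'_mem _ _
    · intro hx
      by_contra hcon
      push_neg at hcon
      obtain ⟨h1, h2⟩ := hcon
      have hcard : (e.image t).card ≤ 2 := le_trans Finset.card_image_le (hrank e he)
      have hlt1 : (e.image t).min' hne < t v :=
        lt_of_le_of_ne (Finset.min'_le _ _ hx) (Ne.symm h1)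
      have hlt2 : t v < (e.image t).max' hne :=
        lt_of_le_of_ne (Finset.le_max' _ _ hx) h2
      have hsub : ({(e.image t).min' hne, t v, (e.image t).max' hne} : Finset ℝ) ⊆ e.image t := by
        intro x hx'
        simp only [Finset.mem_insert, Finset.mem_singleton] at hx'
        rcases hx' with rfl | rfl | rfl
        · exact Finset.min'_mem _ _
        · exact hx
        · exact Finset.max'_mem _ _
      have hc3 : ({(e.image t).min' hne, t v, (e.image t).max' hne} : Finset ℝ).card = 3 := by
        rw [Finset.card_insert_of_notMem, Finset.card_insert_of_notMem,
          Finset.card_singleton]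
        · simp only [Finset.mem_singleton]
          intro h; exact absurd h (by linarith)
        · simp only [Finset.mem_insert, Finset.mem_singleton]
          push_neg
          constructor
          · intro h; exact absurd h (by linarith)
          · intro h; exact absurd h (by linarith)
      have := Finset.card_le_card hsub
      omega
  have hinc : ∀ v ∈ H.V, ∀ e ∈ H.E, (v ∈ e ↔ α v ∈ β e) := by
    intro v hv e he
    rw [hmem e he v, Finset.mem_image]
    constructor
    · intro h; exact ⟨v, h, rfl⟩
    · rintro ⟨u, hu, huv⟩
      have : u = v := tinj (H.edge_subset e he hu) hv huv
      rwa [← this]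
  refine ⟨⟨α, β, ?_, ?_, ?_, hinc⟩⟩
  · intro v hv w hw h
    exact tinj hv hw (congrArg Prod.fst h)
  · intro e he e' he' h
    simp only [Finset.mem_coe] at he he'
    ext v
    constructor
    · intro hv
      have hvV := H.edge_subset e he hv
      exact (hinc v hvV e' he').2 (h ▸ (hinc v hvV e he).1 hv)
    · intro hv
      have hvV := H.edge_subset e' he' hv
      exact (hinc v hvV e he).2 (h ▸ (hinc v hvV e' he').1 hv)
  · intro e he
    simp only [hβ, dif_pos (himg e he)]
    exact lineOf_isLine _ _
end
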